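/- The second-order retraction Σ + ξ + ½ ξ Σ⁻¹ ξ is always symmetric positive semidefinite for symmetric ξ, since it equals ½ Σ + ½ (Σ + ξ) Σ⁻¹ (Σ + ξ), and it is positive definite. -/

import Mathlib

open Matrix

lemma smul_posDef {n : ℕ} {A : Matrix (Fin n) (Fin n) ℝ} (hA : A.PosDef) {c : ℝ}
    (hc : 0 < c) : (c • A).PosDef := by
  refine ⟨?_, fun x hx => ?_⟩
  · unfold Matrix.IsHermitian
    rw [conjTranspose_smul, hA.isHermitian]
    simp
  · exact (hA.smul hc).2 hx

lemma smul_posSemidef {n : ℕ} {A : Matrix (Fin n) (Fin n) ℝ} (hA : A.PosSemidef) {c : ℝ}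
    (hc : 0 ≤ c) : (c • A).PosSemidef := by
  refine ⟨?_, fun x => ?_⟩
  · unfold Matrix.IsHermitian
    rw [conjTranspose_smul, hA.isHermitian]
    simp
  · exact (hA.smul hc).2 x

theorem stmt13 {n : ℕ} (S ξ : Matrix (Fin n) (Fin n) ℝ)
    (hS : S.PosDef) (hSsymm : S.IsSymm) (hξ : ξ.IsSymm) :
    S + ξ + (1 / 2 : ℝ) • (ξ * S⁻¹ * ξ)
        = (1 / 2 : ℝ) • S + (1 / 2 : ℝ) • ((S + ξ) * S⁻¹ * (S + ξ)) ∧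
      (S + ξ + (1 / 2 : ℝ) • (ξ * S⁻¹ * ξ)).PosSemidef ∧
      (S + ξ + (1 / 2 : ℝ) • (ξ * S⁻¹ * ξ)).PosDef := by
  have hSinv : S * S⁻¹ = 1 := mul_nonsing_inv S hS.det_pos.ne'.isUnit
  have hinvS : S⁻¹ * S = 1 := nonsing_inv_mul S hS.det_pos.ne'.isUnit
  have heq : S + ξ + (1 / 2 : ℝ) • (ξ * S⁻¹ * ξ)
      = (1 / 2 : ℝ) • S + (1 / 2 : ℝ) • ((S + ξ) * S⁻¹ * (S + ξ)) := by
    have : (S + ξ) * S⁻¹ * (S + ξ) = S + ξ + ξ + ξ * S⁻¹ * ξ := by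
      rw [add_mul, add_mul, hSinv, one_mul, mul_add,
        mul_assoc ξ S⁻¹ S, hinvS, mul_one]
      abel
    rw [this]
    module
  have hconj : ((S + ξ) * S⁻¹ * (S + ξ)).PosSemidef := by
    have := hS.inv.posSemidef.conjTranspose_mul_mul_same (S + ξ)
    have hsymm : (S + ξ)ᴴ = S + ξ := by
      ext i j
      simp [conjTranspose_apply, ← hSsymm.apply, ← hξ.apply, Matrix.transpose_apply]
    rwa [hsymm] at this
  have hpd : ((1 / 2 : ℝ) • S + (1 / 2 : ℝ) • ((S + ξ) * S⁻¹ * (S + ξ))).PosDef := by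
    refine (smul_posDef hS (by norm_num)).add_posSemidef ?_
    exact smul_posSemidef hconj (by norm_num)
  refine ⟨heq, ?_, ?_⟩ <;> rw [heq]
  · exact hpd.posSemidef
  · exact hpd
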